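/- Let K, K′ be unit-area regular hexagons in the torus T and σ, σ′ edges of K, K′ respectively. There exist η > 0 and C > 0 (independent of T) such that if hd(σ, σ′) ≤ η and |K Δ K′| ≥ 2 − η, then hd(∂g_σ(K), ∂K′) ≤ C·hd(σ, σ′), where g_σ(K) is the reflection of K across the line containing σ. -/

import Mathlib

open Real Set MeasureTheory

/-- Side length (= circumradius) of the unit-area regular hexagon: `12^{1/4}/3`. -/
noncomputable def hexSide : ℝ := (12 : ℝ) ^ ((1 : ℝ) / 4) / 3

/-- The `j`-th vertex of the unit-area regular hexagon with center `c`,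
rotated by angle `θ`. -/
noncomputable def hexVtx (c : ℂ) (θ : ℝ) (j : ℕ) : ℂ :=
  c + Complex.exp (θ * Complex.I) * ((hexSide : ℂ) * Complex.exp (j * (π / 3) * Complex.I))

/-- The unit-area regular hexagon with center `c` rotated by angle `θ`. -/
noncomputable def hexSet (c : ℂ) (θ : ℝ) : Set ℂ :=
  convexHull ℝ (Set.range fun j : Fin 6 => hexVtx c θ j)

/-- The `j`-th (closed) edge of the hexagon `hexSet c θ`. -/
noncomputable def hexEdge (c : ℂ) (θ : ℝ) (j : Fin 6) : Set ℂ :=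
  segment ℝ (hexVtx c θ j) (hexVtx c θ ((j + 1 : Fin 6) : ℕ))

/-- Reflection of the plane across the line through the distinct points `a, b`. -/
noncomputable def reflLine (a b : ℂ) (z : ℂ) : ℂ :=
  a + ((b - a) ^ 2 / ((‖b - a‖ : ℝ) : ℂ) ^ 2) * (starRingEnd ℂ) (z - a)

namespace HexAux

noncomputable def zet : ℂ := Complex.exp (((π : ℂ) / 3) * Complex.I)

lemma zet_im : zet.im = Real.sin (π / 3) := by
  have : ((π : ℂ) / 3) = ((π / 3 : ℝ) : ℂ) := by push_cast; ring
  rw [zet, this, Complex.exp_ofReal_mul_I_im]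

lemma zet_ne_one : zet ≠ 1 := by
  intro h
  have h1 : zet.im = 0 := by rw [h]; simp
  rw [zet_im] at h1
  have := Real.sin_pos_of_pos_of_lt_pi (x := π/3) (by positivity)
    (by linarith [Real.pi_pos])
  linarith

lemma zet_ne_zero : zet ≠ 0 := Complex.exp_ne_zero _

lemma zet_sub_one_ne : zet - 1 ≠ 0 := sub_ne_zero.mpr zet_ne_one

lemma sqrt3_ge : Real.sqrt 3 ≥ 1.7 := by
  nlinarith [Real.sqrt_nonneg 3, Real.sq_sqrt (show (0:ℝ) ≤ 3 by norm_num)]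

lemma norm_zet_sub_one : ‖zet - 1‖ ≥ 0.85 := by
  have h1 : |(zet - 1).im| ≤ ‖zet - 1‖ := Complex.abs_im_le_norm _
  have h2 : (zet - 1).im = Real.sin (π/3) := by
    simp [Complex.sub_im, zet_im]
  rw [Real.sin_pi_div_three] at h2
  have h3 : ‖zet - 1‖ = ‖zet - 1‖ := rfl
  have := sqrt3_ge
  rw [h3]
  calc (0.85 : ℝ) ≤ Real.sqrt 3 / 2 := by linarith
    _ = |(zet - 1).im| := by rw [h2]; rw [abs_of_nonneg]; positivity
    _ ≤ _ := h1

lemma zet_pow_six : zet ^ 6 = 1 := by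
  rw [zet, ← Complex.exp_nat_mul]
  rw [show ((6:ℕ) : ℂ) * ((π : ℂ) / 3 * Complex.I) = 2 * π * Complex.I by push_cast; ring]
  exact Complex.exp_two_pi_mul_I

lemma conj_zet : (starRingEnd ℂ) zet = zet⁻¹ := by
  rw [zet, ← Complex.exp_conj, ← Complex.exp_neg]
  congr 1
  have : ((π : ℂ) / 3) = ((π / 3 : ℝ) : ℂ) := by push_cast; ring
  rw [this]
  simp only [map_mul, Complex.conj_I, Complex.conj_ofReal]
  ring

lemma norm_zet : ‖zet‖ = 1 := by
  have : ((π : ℂ) / 3) = ((π / 3 : ℝ) : ℂ) := by push_cast; ring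
  rw [zet, this]
  exact Complex.norm_exp_ofReal_mul_I _

noncomputable def mu (k : ℕ) : ℂ := (zet ^ k - 1) / (zet - 1)

lemma zet_pow_mod (m : ℕ) : zet ^ (m % 6) = zet ^ m := by
  conv_rhs => rw [← Nat.div_add_mod m 6, pow_add, pow_mul, zet_pow_six, one_pow, one_mul]

lemma mu_mod (m : ℕ) : mu (m % 6) = mu m := by rw [mu, mu, zet_pow_mod]

lemma norm_mu_le (k : ℕ) : ‖mu k‖ ≤ 3 := by
  have h1 : ‖zet ^ k - 1‖ ≤ 2 := by
    calc ‖zet ^ k - 1‖ ≤ ‖zet ^ k‖ + ‖(1:ℂ)‖ := norm_sub_le _ _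
      _ = 2 := by rw [norm_pow, norm_zet]; norm_num
  have h2 := norm_zet_sub_one
  rw [mu, norm_div]
  rw [div_le_iff₀ (by linarith)]
  nlinarith


lemma hexSide_pos : (0:ℝ) < hexSide := by
  rw [hexSide]
  positivity

lemma hexSide_le : hexSide ≤ 0.63 := by
  have h4 : ((12:ℝ) ^ ((1:ℝ)/4)) ^ (4:ℕ) = 12 := by
    rw [← Real.rpow_natCast ((12:ℝ)^((1:ℝ)/4)) 4, ← Real.rpow_mul (by norm_num)]
    norm_num
  have hnn : (0:ℝ) ≤ (12:ℝ)^((1:ℝ)/4) := Real.rpow_nonneg (by norm_num) _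
  rw [hexSide]
  nlinarith [sq_nonneg ((12:ℝ)^((1:ℝ)/4)), sq_nonneg ((12:ℝ)^((1:ℝ)/4) - 1.89),
    sq_nonneg (((12:ℝ)^((1:ℝ)/4))^2 - 3.5)]

lemma hexVtx_eq (c : ℂ) (θ : ℝ) (m : ℕ) :
    hexVtx c θ m = c + (Complex.exp (θ * Complex.I) * (hexSide : ℂ)) * zet ^ m := by
  rw [hexVtx, zet, show ((m:ℂ) * ((π:ℂ)/3) * Complex.I) = (m:ℂ) * (((π:ℂ)/3) * Complex.I) by ring,
    Complex.exp_nat_mul]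
  ring

lemma hexVtx_mod (c : ℂ) (θ : ℝ) (m : ℕ) : hexVtx c θ (m % 6) = hexVtx c θ m := by
  rw [hexVtx_eq, hexVtx_eq, zet_pow_mod]

lemma hexVtx_add (c : ℂ) (θ : ℝ) (j k : ℕ) :
    hexVtx c θ (j + k) = hexVtx c θ j + mu k * (hexVtx c θ (j+1) - hexVtx c θ j) := by
  rw [hexVtx_eq, hexVtx_eq, hexVtx_eq, mu]
  have h := zet_sub_one_ne
  field_simp
  ring

lemma hexVtx_sub_ne (c : ℂ) (θ : ℝ) (j : ℕ) : hexVtx c θ (j+1) - hexVtx c θ j ≠ 0 := by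
  rw [hexVtx_eq, hexVtx_eq]
  have : c + Complex.exp (θ*Complex.I) * hexSide * zet ^ (j+1) -
      (c + Complex.exp (θ*Complex.I) * hexSide * zet ^ j)
      = Complex.exp (θ*Complex.I) * hexSide * zet ^ j * (zet - 1) := by ring
  rw [this]
  apply mul_ne_zero
  apply mul_ne_zero
  apply mul_ne_zero (Complex.exp_ne_zero _)
  · exact_mod_cast Complex.ofReal_ne_zero.mpr (ne_of_gt hexSide_pos)
  · exact pow_ne_zero _ zet_ne_zero
  · exact zet_sub_one_ne

lemma hexVtx_norm (c : ℂ) (θ : ℝ) (m : ℕ) : ‖hexVtx c θ m - c‖ = hexSide := by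
  rw [hexVtx_eq]
  have : c + Complex.exp (θ*Complex.I) * hexSide * zet ^ m - c
      = Complex.exp (θ*Complex.I) * hexSide * zet ^ m := by ring
  rw [this, norm_mul, norm_mul, norm_pow, norm_zet, Complex.norm_exp_ofReal_mul_I]
  simp [abs_of_pos hexSide_pos, Complex.norm_real]

lemma hexCenter (c : ℂ) (θ : ℝ) (j : ℕ) :
    c = hexVtx c θ j - (hexVtx c θ (j+1) - hexVtx c θ j) / (zet - 1) := by
  rw [hexVtx_eq, hexVtx_eq]
  have h := zet_sub_one_ne
  field_simp
  ring

noncomputable def mulLM (w : ℂ) : ℂ →ₗ[ℝ] ℂ where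
  toFun z := w * z
  map_add' := by intros; ring
  map_smul' := by
    intro r z
    simp only [RingHom.id_apply, Complex.real_smul]
    ring

noncomputable def amul (t w : ℂ) : ℂ →ᵃ[ℝ] ℂ where
  toFun z := t + w * z
  linear := mulLM w
  map_vadd' p v := by
    show t + w * (v + p) = w * v + (t + w * p)
    ring

@[simp] lemma amul_apply (t w z : ℂ) : amul t w z = t + w * z := rfl

noncomputable def aconj : ℂ →ᵃ[ℝ] ℂ := Complex.conjAe.toLinearMap.toAffineMap

@[simp] lemma aconj_apply (z : ℂ) : aconj z = (starRingEnd ℂ) z := rfl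

noncomputable def Hstd : Set ℂ := convexHull ℝ (Set.range fun k : Fin 6 => mu k)

lemma Hstd_compact : IsCompact Hstd := (Set.finite_range _).isCompact_convexHull ℝ

lemma conj_mu (k : ℕ) (hk : k ≤ 6) : (starRingEnd ℂ) (mu k) = 1 - mu (7 - k) := by
  have h7 : zet ^ (7 - k) * zet ^ k = zet := by
    rw [← pow_add, Nat.sub_add_cancel (by omega)]
    calc zet ^ 7 = zet ^ 6 * zet := by ring
      _ = zet := by rw [zet_pow_six, one_mul]
  have hzk : zet ^ k ≠ 0 := pow_ne_zero _ zet_ne_zero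
  have h4 := zet_sub_one_ne
  have h5 : zet⁻¹ = zet ^ 5 := by
    apply inv_eq_of_mul_eq_one_right
    calc zet * zet ^ 5 = zet ^ 6 := by ring
      _ = 1 := zet_pow_six
  have h5k : zet ^ 5 - 1 ≠ 0 := by
    rw [← h5, sub_ne_zero]
    intro h
    exact zet_ne_one (by simpa using congrArg (·⁻¹) h)
  have h6 : (zet ^ 5) ^ k * zet ^ k = 1 := by
    calc (zet ^ 5) ^ k * zet ^ k = (zet ^ 6) ^ k := by ring
      _ = 1 := by rw [zet_pow_six, one_pow]
  rw [mu, mu]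
  simp only [map_div₀, map_sub, map_pow, map_one]
  rw [conj_zet, inv_pow, h5]
  rw [eq_sub_iff_add_eq, div_add_div _ _ h5k h4, div_eq_one_iff_eq (mul_ne_zero h5k h4)]
  have hx := zet_pow_six
  have hBA : zet ^ (7-k) = zet * (zet^5)^k := by
    have h9 : zet ^ (7-k) * zet^k = (zet * (zet^5)^k) * zet^k := by
      rw [h7, mul_assoc, h6, mul_one]
    exact mul_right_cancel₀ hzk h9
  field_simp
  linear_combination (zet^5 - 1) * h7 + (1 - zet^k) * hx

lemma range_conj_mu :
    (Set.range fun k : Fin 6 => (starRingEnd ℂ) (mu k)) =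
    (Set.range fun k : Fin 6 => 1 - mu k) := by
  have key : ∀ k : Fin 6, (starRingEnd ℂ) (mu (k : ℕ)) = 1 - mu (((1 - k : Fin 6)) : ℕ) := by
    intro k
    have hk : (k : ℕ) < 6 := k.isLt
    have hsub : (((1 - k : Fin 6)) : ℕ) = (7 - (k : ℕ)) % 6 := by
      rw [Fin.sub_def]
      simp only [Fin.val_one]
      omega
    rw [hsub, mu_mod, conj_mu _ (by omega)]
  have : (fun k : Fin 6 => (starRingEnd ℂ) (mu (k : ℕ)))
      = (fun m : Fin 6 => 1 - mu (m : ℕ)) ∘ (fun k : Fin 6 => 1 - k) := by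
    funext k
    exact key k
  rw [this, Set.range_comp, Set.range_eq_univ.mpr, Set.image_univ]
  intro m
  exact ⟨1 - m, by abel⟩

lemma conj_Hstd : (starRingEnd ℂ) '' Hstd = (fun z : ℂ => 1 - z) '' Hstd := by
  have h1 : (starRingEnd ℂ) '' Hstd = aconj '' Hstd := rfl
  have h2 : (fun z : ℂ => 1 - z) '' Hstd = (amul 1 (-1)) '' Hstd := by
    apply Set.image_congr
    intro z _
    simp
    ring
  rw [h1, h2, Hstd, AffineMap.image_convexHull, AffineMap.image_convexHull,
    ← Set.range_comp, ← Set.range_comp]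
  congr 1
  have e1 : (aconj ∘ fun k : Fin 6 => mu k) = fun k : Fin 6 => (starRingEnd ℂ) (mu k) := rfl
  have e2 : ((amul 1 (-1)) ∘ fun k : Fin 6 => mu k) = fun k : Fin 6 => 1 - mu k := by
    funext k
    simp
    ring
  rw [e1, e2, range_conj_mu]


lemma reflLine_comp (a b : ℂ) (hab : b - a ≠ 0) (z : ℂ) :
    reflLine a b (a + (b - a) * z) = a + (b - a) * (starRingEnd ℂ) z := by
  have key : (((‖b - a‖ : ℝ) : ℂ)) ^ 2 = (b - a) * (starRingEnd ℂ) (b - a) := by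
    rw [Complex.mul_conj, ← Complex.ofReal_pow]
    norm_cast
    rw [Complex.sq_norm]
  have hc : (starRingEnd ℂ) (b - a) ≠ 0 := fun h =>
    hab (by simpa using congrArg (starRingEnd ℂ) h)
  rw [reflLine, key]
  have : a + (b - a) * z - a = (b - a) * z := by ring
  rw [this, map_mul]
  set v := (starRingEnd ℂ) (b - a) with hv
  set u := (starRingEnd ℂ) z with hu
  field_simp

lemma frontier_affimage (t w : ℂ) (hw : w ≠ 0) (S : Set ℂ) :
    frontier ((fun z => t + w * z) '' S) = (fun z => t + w * z) '' frontier S := by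
  have h := ((Homeomorph.mulLeft₀ w hw).trans (Homeomorph.addLeft t)).image_frontier S
  have he : ⇑((Homeomorph.mulLeft₀ w hw).trans (Homeomorph.addLeft t)) = fun z => t + w * z := by
    funext z
    rfl
  rw [he] at h
  exact h.symm

open Fin.NatCast in
lemma hexSet_eq (c : ℂ) (θ : ℝ) (j : ℕ) :
    hexSet c θ = (amul (hexVtx c θ j) (hexVtx c θ (j+1) - hexVtx c θ j)) '' Hstd := by
  rw [Hstd, AffineMap.image_convexHull, ← Set.range_comp, hexSet]
  congr 1
  have key : ∀ k : Fin 6,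
      (amul (hexVtx c θ j) (hexVtx c θ (j+1) - hexVtx c θ j)) (mu k)
        = hexVtx c θ (((j : Fin 6) + k : Fin 6) : ℕ) := by
    intro k
    have h1 : ((((j : Fin 6) + k : Fin 6)) : ℕ) = (j + (k : ℕ)) % 6 := by
      simp only [Fin.add_def, Fin.val_natCast]
      omega
    rw [h1, hexVtx_mod]
    conv_rhs => rw [hexVtx_add]
    simp only [amul_apply]
    ring
  have : ((amul (hexVtx c θ j) (hexVtx c θ (j+1) - hexVtx c θ j)) ∘ fun k : Fin 6 => mu k)
      = (fun m : Fin 6 => hexVtx c θ (m : ℕ)) ∘ (fun k : Fin 6 => (j : Fin 6) + k) := by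
    funext k
    exact key k
  rw [this, Set.range_comp,
    Set.range_eq_univ.mpr (fun m => ⟨m - (j : Fin 6), by abel⟩ :
      Function.Surjective fun k : Fin 6 => (j : Fin 6) + k),
    Set.image_univ]


lemma seg_compact (u v : ℂ) : IsCompact (segment ℝ u v) := by
  rw [← convexHull_pair]
  exact ((Set.finite_singleton v).insert u).isCompact_convexHull ℝ

lemma seg_pt_close (u v : ℂ) (S : Set ℂ) (hS : IsCompact S) (hne : S.Nonempty)
    (d : ℝ) (h : Metric.hausdorffDist (segment ℝ u v) S ≤ d) (x : ℂ)
    (hx : x ∈ segment ℝ u v) : ∃ y ∈ S, dist x y ≤ d := by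
  have hfin : EMetric.hausdorffEdist (segment ℝ u v) S ≠ ⊤ :=
    Metric.hausdorffEdist_ne_top_of_nonempty_of_bounded ⟨x, hx⟩ hne
      ((seg_compact u v).isBounded) hS.isBounded
  have h1 : Metric.infDist x S ≤ d :=
    le_trans (Metric.infDist_le_hausdorffDist_of_mem hx hfin) h
  obtain ⟨y, hyS, hy⟩ := hS.exists_infDist_eq_dist hne x
  exact ⟨y, hyS, by rw [← hy]; exact h1⟩

lemma seg_endpoints (a b a' b' : ℂ) (d : ℝ)
    (h : Metric.hausdorffDist (segment ℝ a b) (segment ℝ a' b') ≤ d) :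
    (dist a a' ≤ 3 * d ∧ dist b b' ≤ 3 * d) ∨ (dist a b' ≤ 3 * d ∧ dist b a' ≤ 3 * d) := by
  have hd0 : 0 ≤ d := le_trans Metric.hausdorffDist_nonneg h
  have h' : Metric.hausdorffDist (segment ℝ a' b') (segment ℝ a b) ≤ d := by
    rwa [Metric.hausdorffDist_comm]
  -- nearest points on [a,b] to a', b'
  obtain ⟨y₁, hy₁m, hy₁⟩ := seg_pt_close a' b' (segment ℝ a b) (seg_compact a b)
    ⟨a, left_mem_segment ℝ a b⟩ d h' a' (left_mem_segment ℝ a' b')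
  obtain ⟨y₂, hy₂m, hy₂⟩ := seg_pt_close a' b' (segment ℝ a b) (seg_compact a b)
    ⟨a, left_mem_segment ℝ a b⟩ d h' b' (right_mem_segment ℝ a' b')
  -- nearest points on [a',b'] to a, b
  obtain ⟨z₁, hz₁m, hz₁⟩ := seg_pt_close a b (segment ℝ a' b') (seg_compact a' b')
    ⟨a', left_mem_segment ℝ a' b'⟩ d h a (left_mem_segment ℝ a b)
  obtain ⟨z₂, hz₂m, hz₂⟩ := seg_pt_close a b (segment ℝ a' b') (seg_compact a' b')
    ⟨a', left_mem_segment ℝ a' b'⟩ d h b (right_mem_segment ℝ a b)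
  rw [segment_eq_image'] at hy₁m hy₂m hz₁m hz₂m
  obtain ⟨r₁, hr₁, hyr₁⟩ := hy₁m
  obtain ⟨r₂, hr₂, hyr₂⟩ := hy₂m
  obtain ⟨t₁, ht₁, hzt₁⟩ := hz₁m
  obtain ⟨t₂, ht₂, hzt₂⟩ := hz₂m
  simp only [mem_Icc] at hr₁ hr₂ ht₁ ht₂
  subst hyr₁ hyr₂ hzt₁ hzt₂
  rw [dist_eq_norm] at hy₁ hy₂ hz₁ hz₂
  set L : ℝ := ‖b - a‖ with hL
  have hL0 : 0 ≤ L := norm_nonneg _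
  -- the two key estimates
  have key : ∀ t : ℝ, 0 ≤ t → t ≤ 1 →
      ‖(a' + t • (b' - a')) - (a + ((1-t)*r₁ + t*r₂) • (b - a))‖ ≤ d := by
    intro t ht0 ht1
    have hid : (a' + t • (b' - a')) - (a + ((1-t)*r₁ + t*r₂) • (b - a))
        = (1-t) • (a' - (a + r₁ • (b - a))) + t • (b' - (a + r₂ • (b - a))) := by
      simp only [Complex.real_smul]
      push_cast
      ring
    rw [hid]
    calc ‖(1-t) • (a' - (a + r₁ • (b - a))) + t • (b' - (a + r₂ • (b - a)))‖
        ≤ ‖(1-t) • (a' - (a + r₁ • (b - a)))‖ + ‖t • (b' - (a + r₂ • (b - a)))‖ :=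
          norm_add_le _ _
      _ = (1-t) * ‖a' - (a + r₁ • (b - a))‖ + t * ‖b' - (a + r₂ • (b - a))‖ := by
          rw [norm_smul, norm_smul, Real.norm_eq_abs, Real.norm_eq_abs,
            abs_of_nonneg (by linarith), abs_of_nonneg ht0]
      _ ≤ (1-t) * d + t * d := by
          apply add_le_add
          · exact mul_le_mul_of_nonneg_left hy₁ (by linarith)
          · exact mul_le_mul_of_nonneg_left hy₂ ht0
      _ = d := by ring
  have hpdist : ∀ r s : ℝ, ‖(a + r • (b - a)) - (a + s • (b - a))‖ = |r - s| * L := by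
    intro r s
    have : (a + r • (b - a)) - (a + s • (b - a)) = (r - s) • (b - a) := by
      simp only [Complex.real_smul]; push_cast; ring
    rw [this, norm_smul, Real.norm_eq_abs]
  set ρ : ℝ := (1-t₁)*r₁ + t₁*r₂ with hρdef
  set ρ' : ℝ := (1-t₂)*r₁ + t₂*r₂ with hρ'def
  have hρa : ρ * L ≤ 2 * d := by
    have h1 : ‖a - (a + ρ • (b - a))‖ ≤ 2 * d := by
      calc ‖a - (a + ρ • (b - a))‖
          ≤ ‖a - (a' + t₁ • (b' - a'))‖ + ‖(a' + t₁ • (b' - a')) - (a + ρ • (b - a))‖ :=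
            norm_sub_le_norm_sub_add_norm_sub _ _ _
        _ ≤ d + d := add_le_add hz₁ (key t₁ ht₁.1 ht₁.2)
        _ = 2 * d := by ring
    have h2 : ‖a - (a + ρ • (b - a))‖ = ρ * L := by
      have := hpdist 0 ρ
      simp only [zero_smul, add_zero] at this
      rw [this]
      have hρ0 : 0 ≤ ρ :=
        add_nonneg (mul_nonneg (by linarith [ht₁.2]) hr₁.1) (mul_nonneg ht₁.1 hr₂.1)
      rw [abs_of_nonpos (by linarith), neg_sub, sub_zero]
    linarith [h2 ▸ h1]
  have hρb : (1 - ρ') * L ≤ 2 * d := by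
    have h1 : ‖b - (a + ρ' • (b - a))‖ ≤ 2 * d := by
      calc ‖b - (a + ρ' • (b - a))‖
          ≤ ‖b - (a' + t₂ • (b' - a'))‖ + ‖(a' + t₂ • (b' - a')) - (a + ρ' • (b - a))‖ :=
            norm_sub_le_norm_sub_add_norm_sub _ _ _
        _ ≤ d + d := add_le_add hz₂ (key t₂ ht₂.1 ht₂.2)
        _ = 2 * d := by ring
    have h2 : ‖b - (a + ρ' • (b - a))‖ = |1 - ρ'| * L := by
      have he : b - (a + ρ' • (b - a)) = (1 - ρ') • (b - a) := by
        simp only [Complex.real_smul]; push_cast; ring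
      rw [he, norm_smul, Real.norm_eq_abs]
    have hρ'1 : ρ' ≤ 1 := by
      nlinarith [mul_nonneg (sub_nonneg.mpr ht₂.2) (sub_nonneg.mpr hr₁.2),
        mul_nonneg ht₂.1 (sub_nonneg.mpr hr₂.2)]
    rw [h2, abs_of_nonneg (by linarith)] at h1
    exact h1
  -- distances from endpoints to their nearest parameter points
  have hda : dist a a' ≤ r₁ * L + d := by
    rw [dist_eq_norm]
    calc ‖a - a'‖ ≤ ‖a - (a + r₁ • (b - a))‖ + ‖(a + r₁ • (b - a)) - a'‖ :=
        norm_sub_le_norm_sub_add_norm_sub _ _ _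
      _ ≤ r₁ * L + d := by
          have h2 := hpdist 0 r₁
          simp only [zero_smul, add_zero] at h2
          rw [h2, abs_of_nonpos (by linarith [hr₁.1]), neg_sub, sub_zero]
          have : ‖(a + r₁ • (b - a)) - a'‖ = ‖a' - (a + r₁ • (b - a))‖ := norm_sub_rev _ _
          rw [this]
          exact add_le_add_right hy₁ _
  have hdb' : dist a b' ≤ r₂ * L + d := by
    rw [dist_eq_norm]
    calc ‖a - b'‖ ≤ ‖a - (a + r₂ • (b - a))‖ + ‖(a + r₂ • (b - a)) - b'‖ :=
        norm_sub_le_norm_sub_add_norm_sub _ _ _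
      _ ≤ r₂ * L + d := by
          have h2 := hpdist 0 r₂
          simp only [zero_smul, add_zero] at h2
          rw [h2, abs_of_nonpos (by linarith [hr₂.1]), neg_sub, sub_zero]
          rw [norm_sub_rev (a + r₂ • (b - a)) b']
          exact add_le_add_right hy₂ _
  have hdbb : dist b b' ≤ (1 - r₂) * L + d := by
    rw [dist_eq_norm]
    calc ‖b - b'‖ ≤ ‖b - (a + r₂ • (b - a))‖ + ‖(a + r₂ • (b - a)) - b'‖ :=
        norm_sub_le_norm_sub_add_norm_sub _ _ _
      _ ≤ (1 - r₂) * L + d := by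
          have h2 : ‖b - (a + r₂ • (b - a))‖ = |1 - r₂| * L := by
            have he : b - (a + r₂ • (b - a)) = (1 - r₂) • (b - a) := by
              simp only [Complex.real_smul]; push_cast; ring
            rw [he, norm_smul, Real.norm_eq_abs]
          rw [h2, abs_of_nonneg (by linarith [hr₂.2])]
          rw [norm_sub_rev (a + r₂ • (b - a)) b']
          exact add_le_add_right hy₂ _
  have hdba : dist b a' ≤ (1 - r₁) * L + d := by
    rw [dist_eq_norm]
    calc ‖b - a'‖ ≤ ‖b - (a + r₁ • (b - a))‖ + ‖(a + r₁ • (b - a)) - a'‖ :=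
        norm_sub_le_norm_sub_add_norm_sub _ _ _
      _ ≤ (1 - r₁) * L + d := by
          have h2 : ‖b - (a + r₁ • (b - a))‖ = |1 - r₁| * L := by
            have he : b - (a + r₁ • (b - a)) = (1 - r₁) • (b - a) := by
              simp only [Complex.real_smul]; push_cast; ring
            rw [he, norm_smul, Real.norm_eq_abs]
          rw [h2, abs_of_nonneg (by linarith [hr₁.2])]
          rw [norm_sub_rev (a + r₁ • (b - a)) a']
          exact add_le_add_right hy₁ _
  rcases le_total r₁ r₂ with hcase | hcase
  · left
    constructor
    · have hr1ρ : r₁ * L ≤ ρ * L := by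
        apply mul_le_mul_of_nonneg_right _ hL0
        nlinarith [mul_nonneg ht₁.1 (sub_nonneg.mpr hcase)]
      linarith
    · have hr2ρ : (1 - r₂) * L ≤ (1 - ρ') * L := by
        apply mul_le_mul_of_nonneg_right _ hL0
        nlinarith [mul_nonneg (sub_nonneg.mpr ht₂.2) (sub_nonneg.mpr hcase)]
      linarith
  · right
    constructor
    · have hr2ρ : r₂ * L ≤ ρ * L := by
        apply mul_le_mul_of_nonneg_right _ hL0
        nlinarith [mul_nonneg (sub_nonneg.mpr ht₁.2) (sub_nonneg.mpr hcase)]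
      linarith
    · have hr1ρ : (1 - r₁) * L ≤ (1 - ρ') * L := by
        apply mul_le_mul_of_nonneg_right _ hL0
        nlinarith [mul_nonneg ht₂.1 (sub_nonneg.mpr hcase)]
      linarith




lemma hexSet_subset_ball (c : ℂ) (θ : ℝ) : hexSet c θ ⊆ Metric.closedBall c hexSide := by
  apply convexHull_min _ (convex_closedBall c hexSide)
  rintro x ⟨m, rfl⟩
  simp only [Metric.mem_closedBall, dist_eq_norm]
  rw [hexVtx_norm]

lemma Hstd_subset_ball : Hstd ⊆ Metric.closedBall 0 3 := by
  apply convexHull_min _ (convex_closedBall 0 3)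
  rintro x ⟨k, rfl⟩
  simp only [Metric.mem_closedBall, dist_zero_right]
  exact norm_mu_le _

lemma conj_Hstd_subset_ball : (starRingEnd ℂ) '' Hstd ⊆ Metric.closedBall 0 3 := by
  rintro x ⟨z, hz, rfl⟩
  simp only [Metric.mem_closedBall, dist_zero_right]
  rw [RCLike.norm_conj]
  simpa [Metric.mem_closedBall, dist_zero_right] using Hstd_subset_ball hz

lemma X_subset_ball : frontier ((starRingEnd ℂ) '' Hstd) ⊆ Metric.closedBall 0 3 := by
  have hcl : IsClosed ((starRingEnd ℂ) '' Hstd) :=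
    (Hstd_compact.image Complex.continuous_conj).isClosed
  exact (hcl.frontier_subset).trans conj_Hstd_subset_ball

end HexAux


open HexAux

/-- Step one of Theorem 3.2: there exist `η, C > 0` such that if `K, K′` are unit-area
regular hexagons with edges `σ, σ′` satisfying `hd(σ,σ′) ≤ η` and `|K Δ K′| ≥ 2 − η`,
then `hd(∂ g_σ(K), ∂K′) ≤ C·hd(σ,σ′)`, where `g_σ(K)` is the reflection of `K`
across the line containing `σ`. -/
theorem reflected_hexagon_hausdorff_estimate :
    ∃ η > (0 : ℝ), ∃ C > (0 : ℝ),
      ∀ (c c' : ℂ) (θ θ' : ℝ) (j j' : Fin 6),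
        Metric.hausdorffDist (hexEdge c θ j) (hexEdge c' θ' j') ≤ η →
        (MeasureTheory.volume (symmDiff (hexSet c θ) (hexSet c' θ'))).toReal ≥ 2 - η →
        Metric.hausdorffDist
            (frontier (reflLine (hexVtx c θ j) (hexVtx c θ ((j + 1 : Fin 6) : ℕ)) ''
              hexSet c θ))
            (frontier (hexSet c' θ'))
          ≤ C * Metric.hausdorffDist (hexEdge c θ j) (hexEdge c' θ' j') := by
  refine ⟨1/1000, by norm_num, 21, by norm_num, fun c c' θ θ' j j' h1 h2 => ?_⟩
  set d := Metric.hausdorffDist (hexEdge c θ j) (hexEdge c' θ' j') with hd_def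
  have hd0 : 0 ≤ d := Metric.hausdorffDist_nonneg
  -- edge endpoints
  set a : ℂ := hexVtx c θ (j : ℕ) with ha_def
  set b : ℂ := hexVtx c θ ((j : ℕ) + 1) with hb_def
  set a' : ℂ := hexVtx c' θ' (j' : ℕ) with ha'_def
  set b' : ℂ := hexVtx c' θ' ((j' : ℕ) + 1) with hb'_def
  have hvb : hexVtx c θ ((j + 1 : Fin 6) : ℕ) = b := by
    have h : ((j + 1 : Fin 6) : ℕ) = ((j : ℕ) + 1) % 6 := by
      simp [Fin.add_def]
    rw [h, hexVtx_mod]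
  have hvb' : hexVtx c' θ' ((j' + 1 : Fin 6) : ℕ) = b' := by
    have h : ((j' + 1 : Fin 6) : ℕ) = ((j' : ℕ) + 1) % 6 := by
      simp [Fin.add_def]
    rw [h, hexVtx_mod]
  have hedge : hexEdge c θ j = segment ℝ a b := by rw [hexEdge, hvb]
  have hedge' : hexEdge c' θ' j' = segment ℝ a' b' := by rw [hexEdge, hvb']
  have hseg : Metric.hausdorffDist (segment ℝ a b) (segment ℝ a' b') ≤ d := by
    rw [← hedge, ← hedge']
  rcases seg_endpoints a b a' b' d hseg with ⟨hA1, hA2⟩ | ⟨hB1, hB2⟩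
  · -- Case A : same orientation; contradicts the area hypothesis
    exfalso
    have hcc : dist c c' ≤ 15 * d := by
      have hc : c = a - (b - a) / (zet - 1) := hexCenter c θ (j : ℕ)
      have hc' : c' = a' - (b' - a') / (zet - 1) := hexCenter c' θ' (j' : ℕ)
      have hdiff : c - c' = (a - a') - ((b - a) - (b' - a')) / (zet - 1) := by
        rw [hc, hc']; ring
      have hz := norm_zet_sub_one
      have hz0 : (0.85 : ℝ) ≤ ‖zet - 1‖ := hz
      rw [dist_eq_norm, hdiff]
      have e1 : ‖a - a'‖ ≤ 3 * d := by rw [← dist_eq_norm]; exact hA1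
      have e2 : ‖b - b'‖ ≤ 3 * d := by rw [← dist_eq_norm]; exact hA2
      have e3 : ‖(b - a) - (b' - a')‖ ≤ 6 * d := by
        calc ‖(b - a) - (b' - a')‖ = ‖(b - b') - (a - a')‖ := by ring_nf
          _ ≤ ‖b - b'‖ + ‖a - a'‖ := norm_sub_le _ _
          _ ≤ 6 * d := by linarith
      have e4 : ‖((b - a) - (b' - a')) / (zet - 1)‖ ≤ 12 * d := by
        rw [norm_div]
        rw [div_le_iff₀ (by linarith)]
        nlinarith [norm_nonneg ((b - a) - (b' - a'))]
      calc ‖(a - a') - ((b - a) - (b' - a')) / (zet - 1)‖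
          ≤ ‖a - a'‖ + ‖((b - a) - (b' - a')) / (zet - 1)‖ := norm_sub_le _ _
        _ ≤ 15 * d := by linarith
    -- both hexagons inside a small ball
    have hball : hexSet c θ ∪ hexSet c' θ' ⊆ Metric.closedBall c (hexSide + 15 * d) := by
      rintro x (hx | hx)
      · exact Metric.closedBall_subset_closedBall (by linarith)
          (hexSet_subset_ball c θ hx)
      · have h1 : x ∈ Metric.closedBall c' hexSide := hexSet_subset_ball c' θ' hx
        rw [Metric.mem_closedBall] at h1 ⊢
        calc dist x c ≤ dist x c' + dist c' c := dist_triangle _ _ _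
          _ ≤ hexSide + 15 * d := by
              rw [dist_comm c' c]
              linarith
    have hsub : symmDiff (hexSet c θ) (hexSet c' θ') ⊆
        Metric.closedBall c (hexSide + 15 * d) :=
      Set.Subset.trans Set.symmDiff_subset_union hball
    have hvol : (volume (symmDiff (hexSet c θ) (hexSet c' θ'))).toReal ≤
        (hexSide + 15 * d) ^ 2 * π := by
      have hmono : volume (symmDiff (hexSet c θ) (hexSet c' θ')) ≤
          volume (Metric.closedBall c (hexSide + 15 * d)) := measure_mono hsub
      have hb : volume (Metric.closedBall c (hexSide + 15 * d)) =
          ENNReal.ofReal (hexSide + 15 * d) ^ 2 * NNReal.pi :=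
        Complex.volume_closedBall c _
      have hfin : volume (Metric.closedBall c (hexSide + 15 * d)) ≠ ⊤ := by
        rw [hb]
        exact ENNReal.mul_ne_top (by simp [ENNReal.pow_ne_top, ENNReal.ofReal_ne_top])
          ENNReal.coe_ne_top
      calc (volume (symmDiff (hexSet c θ) (hexSet c' θ'))).toReal
          ≤ (volume (Metric.closedBall c (hexSide + 15 * d))).toReal :=
            ENNReal.toReal_mono hfin hmono
        _ = (hexSide + 15 * d) ^ 2 * π := by
            rw [hb, ENNReal.toReal_mul, ENNReal.toReal_pow,
              ENNReal.toReal_ofReal (by nlinarith [hexSide_pos, hd0]), ENNReal.coe_toReal,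
              NNReal.coe_real_pi]
    have hs1 : hexSide ≤ 0.63 := hexSide_le
    have hπ : π ≤ 4 := Real.pi_le_four
    have hπ0 : 0 < π := Real.pi_pos
    have hdle : d ≤ 1/1000 := h1
    have : (hexSide + 15 * d) ^ 2 * π ≤ 1.7 := by
      have h0 : 0 ≤ hexSide + 15 * d := by nlinarith [hexSide_pos, hd0]
      have hle : hexSide + 15 * d ≤ 0.645 := by linarith
      nlinarith
    linarith [h2]
  · -- Case B : the reflected hexagon is close to K'
    have hab : b - a ≠ 0 := hexVtx_sub_ne c θ (j : ℕ)
    have hab' : a' - b' ≠ 0 := by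
      have := hexVtx_sub_ne c' θ' (j' : ℕ)
      intro h
      exact this (by linear_combination -h)
    -- K = amul a (b-a) '' Hstd
    have hK : hexSet c θ = (amul a (b - a)) '' Hstd := hexSet_eq c θ (j : ℕ)
    have hK' : hexSet c' θ' = (amul a' (b' - a')) '' Hstd := hexSet_eq c' θ' (j' : ℕ)
    -- reflected hexagon
    have himg : reflLine a b '' hexSet c θ
        = (fun z => a + (b - a) * z) '' ((starRingEnd ℂ) '' Hstd) := by
      rw [hK, ← Set.image_comp, ← Set.image_comp]
      apply Set.image_congr
      intro z _
      show reflLine a b (amul a (b - a) z) = a + (b - a) * (starRingEnd ℂ) z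
      rw [amul_apply]
      exact reflLine_comp a b hab z
    -- K' as image of conj '' Hstd
    have hK'2 : hexSet c' θ' = (fun z => b' + (a' - b') * z) '' ((starRingEnd ℂ) '' Hstd) := by
      rw [hK', conj_Hstd, ← Set.image_comp]
      apply Set.image_congr
      intro z _
      show amul a' (b' - a') z = b' + (a' - b') * (1 - z)
      rw [amul_apply]
      ring
    set X : Set ℂ := frontier ((starRingEnd ℂ) '' Hstd) with hX_def
    have hfr1 : frontier (reflLine a b '' hexSet c θ) = (fun z => a + (b - a) * z) '' X := by
      rw [himg, frontier_affimage a (b - a) hab]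
    have hfr2 : frontier (hexSet c' θ') = (fun z => b' + (a' - b') * z) '' X := by
      rw [hK'2, frontier_affimage b' (a' - b') hab']
    rw [hvb, hfr1, hfr2]
    have hXball := X_subset_ball
    have hptwise : ∀ z ∈ X,
        dist (a + (b - a) * z) (b' + (a' - b') * z) ≤ 21 * d := by
      intro z hz
      have hzn : ‖z‖ ≤ 3 := by
        have := hXball hz
        simpa [Metric.mem_closedBall, dist_zero_right] using this
      rw [dist_eq_norm]
      have hid : (a + (b - a) * z) - (b' + (a' - b') * z)
          = (a - b') + ((b - a') + (b' - a)) * z := by ring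
      rw [hid]
      have e1 : ‖a - b'‖ ≤ 3 * d := by rw [← dist_eq_norm]; exact hB1
      have e2 : ‖b - a'‖ ≤ 3 * d := by rw [← dist_eq_norm]; exact hB2
      have e3 : ‖(b - a') + (b' - a)‖ ≤ 6 * d := by
        have hflip : ‖b' - a‖ = ‖a - b'‖ := norm_sub_rev _ _
        calc ‖(b - a') + (b' - a)‖ ≤ ‖b - a'‖ + ‖b' - a‖ := norm_add_le _ _
          _ ≤ 6 * d := by rw [hflip]; linarith
      calc ‖(a - b') + ((b - a') + (b' - a)) * z‖
          ≤ ‖a - b'‖ + ‖((b - a') + (b' - a)) * z‖ := norm_add_le _ _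
        _ ≤ 3 * d + ‖(b - a') + (b' - a)‖ * ‖z‖ := by
            rw [norm_mul]
            linarith
        _ ≤ 3 * d + (6 * d) * 3 := by
            have h6 : 0 ≤ ‖(b - a') + (b' - a)‖ := norm_nonneg _
            nlinarith
        _ = 21 * d := by ring
    apply Metric.hausdorffDist_le_of_mem_dist (by linarith)
    · rintro x ⟨z, hz, rfl⟩
      exact ⟨b' + (a' - b') * z, ⟨z, hz, rfl⟩, hptwise z hz⟩
    · rintro x ⟨z, hz, rfl⟩
      refine ⟨a + (b - a) * z, ⟨z, hz, rfl⟩, ?_⟩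
      rw [dist_comm]
      exact hptwise z hz
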